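/- Let n ≥ 3 and c ∈ int(Δ^{n-1}). If x* ∈ int(Δ^{n-1}) satisfies D_KL(x*‖c) + H(1−x*) ≤ D_KL(x‖c) + H(1−x) for every x ∈ Δ^{n-1}, then cᵢ · (1 − ‖x*‖₂²) = xᵢ*(1 − xᵢ*) for every i, where ‖x*‖₂² = Σᵢ (xᵢ*)². -/

import Mathlib

open Finset

/-- Extropy `H(1-x)`. -/
noncomputable def extropy {n : ℕ} (x : Fin n → ℝ) : ℝ :=
  -∑ i, (1 - x i) * Real.log (1 - x i)

/-- Kullback–Leibler divergence `D_KL(p‖q) = ∑ pᵢ log(pᵢ/qᵢ)` (with `0 log 0 = 0`). -/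
noncomputable def klDiv {n : ℕ} (p q : Fin n → ℝ) : ℝ :=
  ∑ i, p i * Real.log (p i / q i)

lemma hasDerivAt_h (c : ℝ) (hc : 0 < c) {u : ℝ} (hu : 0 < u) (hu1 : u < 1) :
    HasDerivAt (fun v : ℝ => v * Real.log (v / c) - (1 - v) * Real.log (1 - v))
      (Real.log (u / c) + Real.log (1 - u) + 2) u := by
  have h1 : HasDerivAt (fun v : ℝ => v * Real.log v - v * Real.log c)
      ((Real.log u + 1) - Real.log c) u :=
    (Real.hasDerivAt_mul_log hu.ne').sub (by simpa using (hasDerivAt_id u).mul_const (Real.log c))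
  have h1' : HasDerivAt (fun v : ℝ => v * Real.log (v / c))
      ((Real.log u + 1) - Real.log c) u := by
    apply h1.congr_of_eventuallyEq
    filter_upwards [eventually_gt_nhds hu] with v hv
    rw [Real.log_div hv.ne' hc.ne', mul_sub]
  have h2 : HasDerivAt (fun v : ℝ => (1 - v) * Real.log (1 - v))
      (-(Real.log (1 - u) + 1)) u := by
    have hne : (1 : ℝ) - u ≠ 0 := by linarith
    have hcomp := (Real.hasDerivAt_mul_log hne).comp u
      ((hasDerivAt_const u (1:ℝ)).sub (hasDerivAt_id u))
    simpa [Function.comp_def] using hcomp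
  have h := h1'.sub h2
  have heq : Real.log (u / c) + Real.log (1 - u) + 2
      = ((Real.log u + 1) - Real.log c) - (-(Real.log (1 - u) + 1)) := by
    rw [Real.log_div hu.ne' hc.ne']; ring
  rw [heq]; exact h

theorem minimizer_satisfies_KKT (n : ℕ) (hn : 3 ≤ n) (c : Fin n → ℝ)
    (hc : ∀ i, 0 < c i) (hcsum : ∑ i, c i = 1)
    (xs : Fin n → ℝ) (hxs : ∀ i, 0 < xs i) (hxssum : ∑ i, xs i = 1)
    (hmin : ∀ x : Fin n → ℝ, (∀ i, 0 ≤ x i) → (∑ i, x i = 1) →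
      klDiv xs c + extropy xs ≤ klDiv x c + extropy x) :
    ∀ i, c i * (1 - ∑ j, (xs j) ^ 2) = xs i * (1 - xs i) := by
  classical
  -- each coordinate is < 1
  have hlt : ∀ k, xs k < 1 := by
    intro k
    haveI : Nontrivial (Fin n) := ⟨⟨⟨0, by omega⟩, ⟨1, by omega⟩, by simp [Fin.ext_iff]⟩⟩
    obtain ⟨m, hm⟩ := exists_ne k
    have := Finset.single_lt_sum hm (Finset.mem_univ k) (Finset.mem_univ m) (hxs m)
      (fun l _ _ => (hxs l).le)
    linarith [hxssum ▸ this]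
  -- objective as a single sum
  have hobj : ∀ p : Fin n → ℝ, klDiv p c + extropy p
      = ∑ k, (p k * Real.log (p k / c k) - (1 - p k) * Real.log (1 - p k)) := by
    intro p
    simp only [klDiv, extropy]
    rw [Finset.sum_sub_distrib]
    ring
  -- key stationarity: the ratios are equal
  have key : ∀ i j : Fin n, i ≠ j →
      xs i * (1 - xs i) / c i = xs j * (1 - xs j) / c j := by
    intro i j hij
    set d : Fin n → ℝ := fun k => if k = i then 1 else if k = j then -1 else 0 with hd
    set g : ℝ → ℝ := fun t => ∑ k,
      ((xs k + t * d k) * Real.log ((xs k + t * d k) / c k)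
        - (1 - (xs k + t * d k)) * Real.log (1 - (xs k + t * d k))) with hg
    set A : Fin n → ℝ := fun k => Real.log (xs k / c k) + Real.log (1 - xs k) + 2 with hA
    have hder : HasDerivAt g (∑ k, A k * d k) 0 := by
      apply HasDerivAt.fun_sum
      intro k _
      have haff : HasDerivAt (fun t : ℝ => xs k + t * d k) (d k) 0 := by
        simpa using ((hasDerivAt_id (0:ℝ)).mul_const (d k)).const_add (xs k)
      have hh : HasDerivAt
          (fun v : ℝ => v * Real.log (v / c k) - (1 - v) * Real.log (1 - v))
          (A k) ((fun t : ℝ => xs k + t * d k) 0) := by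
        simpa [hA] using hasDerivAt_h (c k) (hc k) (hxs k) (hlt k)
      simpa [mul_comm, Function.comp_def] using hh.comp 0 haff
    have hloc : IsLocalMin g 0 := by
      have hε : (0:ℝ) < min (xs i) (xs j) := lt_min (hxs i) (hxs j)
      have hball := Metric.ball_mem_nhds (0:ℝ) hε
      filter_upwards [hball] with t ht
      simp only [Metric.mem_ball, Real.dist_eq, sub_zero] at ht
      have hti : |t| < xs i := lt_of_lt_of_le ht (min_le_left _ _)
      have htj : |t| < xs j := lt_of_lt_of_le ht (min_le_right _ _)
      set x : Fin n → ℝ := fun k => xs k + t * d k with hx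
      have hx0 : ∀ k, 0 ≤ x k := by
        intro k
        show 0 ≤ xs k + t * d k
        by_cases h1 : k = i
        · have hdk : d k = 1 := by simp [hd, h1]
          rw [hdk, h1]
          have := abs_lt.mp hti
          linarith
        · by_cases h2 : k = j
          · have hdk : d k = -1 := by simp [hd, h1, h2, hij.symm]
            rw [hdk, h2]
            have := abs_lt.mp htj
            linarith
          · have hdk : d k = 0 := by simp [hd, h1, h2]
            rw [hdk]
            have := hxs k
            linarith
      have hdsum : ∑ k, d k = 0 := by
        have : ∑ k, d k = ∑ k, ((if k = i then (1:ℝ) else 0) + (if k = j then -1 else 0)) := by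
          apply Finset.sum_congr rfl
          intro k _
          by_cases h1 : k = i
          · subst h1; simp [hd, hij, hij.symm]
          · by_cases h2 : k = j <;> simp [hd, h1, h2, hij.symm]
        rw [this, Finset.sum_add_distrib, Finset.sum_ite_eq' univ i (fun _ => (1:ℝ)),
          Finset.sum_ite_eq' univ j (fun _ => (-1:ℝ))]
        simp
      have hxsum : ∑ k, x k = 1 := by
        simp only [hx]
        rw [Finset.sum_add_distrib, ← Finset.mul_sum, hdsum, hxssum]
        ring
      have hle := hmin x hx0 hxsum
      rw [hobj xs, hobj x] at hle
      have hg0 : g 0 = ∑ k, (xs k * Real.log (xs k / c k)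
          - (1 - xs k) * Real.log (1 - xs k)) := by simp [hg]
      have hgt : g t = ∑ k, (x k * Real.log (x k / c k)
          - (1 - x k) * Real.log (1 - x k)) := rfl
      rw [hg0, hgt]; exact hle
    have hD : (∑ k, A k * d k) = 0 := by
      rw [← hder.deriv]; exact hloc.deriv_eq_zero
    have hsum : ∑ k, A k * d k = A i - A j := by
      have : ∑ k, A k * d k
          = ∑ k, ((if k = i then A k else 0) + (if k = j then -A k else 0)) := by
        apply Finset.sum_congr rfl
        intro k _
        by_cases h1 : k = i
        · subst h1; simp [hd, hij, hij.symm]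
        · by_cases h2 : k = j <;> simp [hd, h1, h2, hij.symm]
      rw [this, Finset.sum_add_distrib, Finset.sum_ite_eq' univ i A,
        Finset.sum_ite_eq' univ j (fun k => -A k)]
      simp [sub_eq_add_neg]
    have hAij : A i = A j := by rw [hsum] at hD; linarith
    -- turn equality of logs into equality of ratios
    have hpos : ∀ k : Fin n, 0 < xs k * (1 - xs k) / c k := by
      intro k
      have h1 := hxs k
      have h3 := hc k
      have h2 : 0 < 1 - xs k := by linarith [hlt k]
      positivity
    have hlogeq : Real.log (xs i * (1 - xs i) / c i) = Real.log (xs j * (1 - xs j) / c j) := by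
      have hrw : ∀ k : Fin n, Real.log (xs k * (1 - xs k) / c k)
          = Real.log (xs k / c k) + Real.log (1 - xs k) := by
        intro k
        have ha : xs k / c k ≠ 0 := by
          have h1 := hxs k; have h3 := hc k; positivity
        have hb : (1 : ℝ) - xs k ≠ 0 := by
          have := hlt k; intro h; linarith [sub_eq_zero.mp h]
        rw [show xs k * (1 - xs k) / c k = xs k / c k * (1 - xs k) by ring,
          Real.log_mul ha hb]
      rw [hrw i, hrw j]
      simp only [hA] at hAij
      linarith
    calc xs i * (1 - xs i) / c i = Real.exp (Real.log (xs i * (1 - xs i) / c i)) :=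
          (Real.exp_log (hpos i)).symm
      _ = Real.exp (Real.log (xs j * (1 - xs j) / c j)) := by rw [hlogeq]
      _ = xs j * (1 - xs j) / c j := Real.exp_log (hpos j)
  -- finish the algebra
  set i0 : Fin n := ⟨0, by omega⟩
  set K : ℝ := xs i0 * (1 - xs i0) / c i0 with hK
  have hKi : ∀ k, xs k * (1 - xs k) = c k * K := by
    intro k
    by_cases h : k = i0
    · subst h; rw [hK]; field_simp [hK, (hc i0).ne']
    · have := key k i0 h
      rw [hK, ← this, mul_comm (c k), div_mul_cancel₀ _ (hc k).ne']
  have hsumK : ∑ k, xs k * (1 - xs k) = K := by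
    rw [Finset.sum_congr rfl (fun k _ => hKi k), ← Finset.sum_mul, hcsum, one_mul]
  have hsum2 : ∑ k, xs k * (1 - xs k) = 1 - ∑ k, (xs k) ^ 2 := by
    have : ∀ k : Fin n, xs k * (1 - xs k) = xs k - (xs k) ^ 2 := fun k => by ring
    rw [Finset.sum_congr rfl (fun k _ => this k), Finset.sum_sub_distrib, hxssum]
  intro i
  have : 1 - ∑ j, (xs j) ^ 2 = K := by rw [← hsum2, hsumK]
  rw [this, ← hKi i]
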